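/- arXiv:1805.09397 — 2 statements merged into one kernel-verified Lean document; each statement's English description precedes it below -/
import Mathlib

section
/- In the dynamic structural model under Assumptions C and SX, fix t and (z^{t−1}, x^{t−1}, d^{t−1}, y^{t−1}) such that the conditioning events below have positive probability, and fix two instrument values z_t, z̃_t. If Pr[D_t = 1 | Z^t = (z^{t−1}, z_t), X^{t−1} = x^{t−1}, D^{t−1} = d^{t−1}, Y^{t−1} = y^{t−1}] > Pr[D_t = 1 | Z^t = (z^{t−1}, z̃_t), X^{t−1} = x^{t−1}, D^{t−1} = d^{t−1}, Y^{t−1} = y^{t−1}], then π_t(y^{t−1}, d^{t−1}, z_t) > π_t(y^{t−1}, d^{t−1}, z̃_t). -/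
open MeasureTheory ProbabilityTheory
open scoped ENNReal

structure DynModel (T : ℕ) (Ω : Type) [MeasurableSpace Ω] where
  P : Measure Ω
  probP : IsProbabilityMeasure P
  μf : (t : ℕ) → (Fin t → Bool) → (Fin (t + 1) → Bool) → ℝ → ℝ
  πf : (t : ℕ) → (Fin t → Bool) → (Fin t → Bool) → ℝ → ℝ
  X : ℕ → Ω → ℝ
  Z : ℕ → Ω → ℝ
  U : ℕ → Bool → Ω → ℝ
  V : ℕ → Ω → ℝ
  Y : ℕ → Ω → Bool
  D : ℕ → Ω → Bool
  measX : ∀ t, Measurable (X t)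
  measZ : ∀ t, Measurable (Z t)
  measU : ∀ t b, Measurable (U t b)
  measV : ∀ t, Measurable (V t)
  measY : ∀ t, Measurable (Y t)
  measD : ∀ t, Measurable (D t)
  eqY : ∀ t < T, ∀ ω, Y t ω =
    decide (U t (D t ω) ω ≤ μf t (fun s : Fin t => Y s ω) (fun s : Fin (t + 1) => D s ω) (X t ω))
  eqD : ∀ t < T, ∀ ω, D t ω =
    decide (V t ω ≤ πf t (fun s : Fin t => Y s ω) (fun s : Fin t => D s ω) (Z t ω))

namespace DynModel

variable {T : ℕ} {Ω : Type} [MeasurableSpace Ω]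

/-- Potential outcome `Y_t(d^t)` defined recursively. -/
noncomputable def PY (M : DynModel T Ω) (d : ℕ → Bool) (t : ℕ) (ω : Ω) : Bool :=
  decide (M.U t (d t) ω ≤
    M.μf t (fun s : Fin t => M.PY d s ω) (fun s : Fin (t + 1) => d s) (M.X t ω))
termination_by t
decreasing_by all_goals exact s.isLt

end DynModel

open DynModel

/-- Assumption C: for each regime `d`, the vector `(U(d), V)` has a strictly positive density
with respect to Lebesgue measure on `ℝ^{2T}`. -/
def AssmC {T : ℕ} {Ω : Type} [MeasurableSpace Ω] (M : DynModel T Ω) : Prop :=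
  ∀ d : ℕ → Bool,
    ∃ f : (Fin T → ℝ) × (Fin T → ℝ) → ℝ≥0∞,
      (∀ p, 0 < f p) ∧
      Measure.map
        (fun ω => ((fun s : Fin T => M.U s (d s) ω), (fun s : Fin T => M.V s ω))) M.P
        = volume.withDensity f

/-- Assumption SX: `(Z, X)` is independent of `(U(d), V)` for every regime `d`. -/
def AssmSX {T : ℕ} {Ω : Type} [MeasurableSpace Ω] (M : DynModel T Ω) : Prop :=
  ∀ d : ℕ → Bool,
    IndepFun
      (fun ω => ((fun s : Fin T => M.Z s ω), (fun s : Fin T => M.X s ω)))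
      (fun ω => ((fun s : Fin T => M.U s (d s) ω), (fun s : Fin T => M.V s ω)))
      M.P

/-- The conditioning event `{Z^{t−1} = z^{t−1}, Z_t = z_t, X^{t−1} = x^{t−1},
D^{t−1} = d^{t−1}, Y^{t−1} = y^{t−1}}`. -/
def histEvent {T : ℕ} {Ω : Type} [MeasurableSpace Ω] (M : DynModel T Ω) (t : ℕ)
    (zh xh : Fin t → ℝ) (dh yh : Fin t → Bool) (zt : ℝ) : Set Ω :=
  {ω | (∀ s : Fin t, M.Z s ω = zh s ∧ M.X s ω = xh s ∧ M.D s ω = dh s ∧ M.Y s ω = yh s) ∧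
    M.Z t ω = zt}

/-! ### Auxiliary development for Statement 3 -/

namespace DynAux

variable {T : ℕ} {Ω : Type} [MeasurableSpace Ω]

/-- Threshold determining `D_s` given the fixed history. -/
def pth (M : DynModel T Ω) {t : ℕ} (zh : Fin t → ℝ) (dh yh : Fin t → Bool) (s : Fin t) : ℝ :=
  M.πf s (fun r : Fin (s : ℕ) => yh ⟨r, r.isLt.trans s.isLt⟩)
    (fun r : Fin (s : ℕ) => dh ⟨r, r.isLt.trans s.isLt⟩) (zh s)

/-- Threshold determining `Y_s` given the fixed history. -/
def mth (M : DynModel T Ω) {t : ℕ} (xh : Fin t → ℝ) (dh yh : Fin t → Bool) (s : Fin t) : ℝ :=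
  M.μf s (fun r : Fin (s : ℕ) => yh ⟨r, r.isLt.trans s.isLt⟩)
    (fun r : Fin ((s : ℕ) + 1) => dh ⟨r, lt_of_le_of_lt (Nat.lt_succ_iff.mp r.isLt) s.isLt⟩)
    (xh s)

/-- Condition on the unobservables only, equivalent to `D_s = d_s ∧ Y_s = y_s`
given the instrument/covariate history. -/
def Bcond (M : DynModel T Ω) {t : ℕ} (zh xh : Fin t → ℝ) (dh yh : Fin t → Bool)
    (s : Fin t) (ω : Ω) : Prop :=
  decide (M.V s ω ≤ pth M zh dh yh s) = dh s ∧
  decide (M.U s (dh s) ω ≤ mth M xh dh yh s) = yh s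

lemma histChar (M : DynModel T Ω) {t : ℕ} (ht : t < T) (zh xh : Fin t → ℝ)
    (dh yh : Fin t → Bool) (ω : Ω)
    (hz : ∀ s : Fin t, M.Z s ω = zh s) (hx : ∀ s : Fin t, M.X s ω = xh s) :
    ∀ k, k ≤ t →
      ((∀ s : Fin t, (s : ℕ) < k → M.D s ω = dh s ∧ M.Y s ω = yh s) ↔
       (∀ s : Fin t, (s : ℕ) < k → Bcond M zh xh dh yh s ω)) := by
  intro k
  induction k with
  | zero =>
    intro _
    constructor <;> intro _ s hs <;> exact absurd hs (Nat.not_lt_zero _)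
  | succ k IH =>
    intro hk1
    have hkt : k < t := hk1
    have hkT : k < T := lt_trans hkt ht
    set sk : Fin t := ⟨k, hkt⟩ with hsk
    have key : (∀ s : Fin t, (s : ℕ) < k → M.D s ω = dh s ∧ M.Y s ω = yh s) →
        ((M.D (sk : ℕ) ω = dh sk ∧ M.Y (sk : ℕ) ω = yh sk) ↔ Bcond M zh xh dh yh sk ω) := by
      intro hhist
      have h1 : (fun r : Fin (sk : ℕ) => M.Y r ω) =
          (fun r : Fin (sk : ℕ) => yh ⟨r, r.isLt.trans sk.isLt⟩) := by
        funext r; exact (hhist ⟨r, r.isLt.trans sk.isLt⟩ r.isLt).2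
      have h2 : (fun r : Fin (sk : ℕ) => M.D r ω) =
          (fun r : Fin (sk : ℕ) => dh ⟨r, r.isLt.trans sk.isLt⟩) := by
        funext r; exact (hhist ⟨r, r.isLt.trans sk.isLt⟩ r.isLt).1
      have hDeq : M.D (sk : ℕ) ω = decide (M.V (sk : ℕ) ω ≤ pth M zh dh yh sk) := by
        rw [M.eqD (sk : ℕ) hkT ω, h1, h2, hz sk]
        rfl
      have hYeq : M.D (sk : ℕ) ω = dh sk →
          M.Y (sk : ℕ) ω = decide (M.U (sk : ℕ) (dh sk) ω ≤ mth M xh dh yh sk) := by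
        intro hd
        have h3 : (fun r : Fin ((sk : ℕ) + 1) => M.D r ω) =
            (fun r : Fin ((sk : ℕ) + 1) =>
              dh ⟨r, lt_of_le_of_lt (Nat.lt_succ_iff.mp r.isLt) sk.isLt⟩) := by
          funext r
          rcases Nat.lt_succ_iff_lt_or_eq.mp r.isLt with h | h
          · exact (hhist ⟨r, lt_trans h hkt⟩ h).1
          · simp only [h, Fin.eta]
            exact hd
        rw [M.eqY (sk : ℕ) hkT ω, hd, h1, h3, hx sk]
        rfl
      constructor
      · rintro ⟨hd, hy⟩
        exact ⟨by rw [← hDeq]; exact hd, by rw [← hYeq hd]; exact hy⟩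
      · rintro ⟨hd', hy'⟩
        have hd : M.D (sk : ℕ) ω = dh sk := by rw [hDeq]; exact hd'
        exact ⟨hd, by rw [hYeq hd]; exact hy'⟩
    constructor
    · intro h s hs
      rcases Nat.lt_succ_iff_lt_or_eq.mp hs with h' | h'
      · exact (IH hkt.le).mp (fun r hr => h r (lt_trans hr (Nat.lt_succ_self k))) s h'
      · have hse : s = sk := Fin.ext h'
        subst hse
        exact (key (fun r hr => h r (lt_trans hr (Nat.lt_succ_self k)))).mp
          (h sk (Nat.lt_succ_self k))
    · intro h s hs
      have hhist : ∀ r : Fin t, (r : ℕ) < k → M.D r ω = dh r ∧ M.Y r ω = yh r :=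
        (IH hkt.le).mpr (fun r hr => h r (lt_trans hr (Nat.lt_succ_self k)))
      rcases Nat.lt_succ_iff_lt_or_eq.mp hs with h' | h'
      · exact hhist s h'
      · have hse : s = sk := Fin.ext h'
        subst hse
        exact (key hhist).mpr (h sk (Nat.lt_succ_self k))


/-- The `(Z,X)`-part of the conditioning event, as a set in the product space. -/
def S1set {T t : ℕ} (ht : t < T) (zh xh : Fin t → ℝ) (z : ℝ) :
    Set ((Fin T → ℝ) × (Fin T → ℝ)) :=
  {q | (∀ s : Fin t, q.1 ⟨s, s.isLt.trans ht⟩ = zh s ∧ q.2 ⟨s, s.isLt.trans ht⟩ = xh s) ∧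
    q.1 ⟨t, ht⟩ = z}

/-- The `(U,V)`-part of the conditioning event. -/
def S2bset (M : DynModel T Ω) {t : ℕ} (ht : t < T) (zh xh : Fin t → ℝ)
    (dh yh : Fin t → Bool) : Set ((Fin T → ℝ) × (Fin T → ℝ)) :=
  {p | ∀ s : Fin t, decide (p.2 ⟨s, s.isLt.trans ht⟩ ≤ pth M zh dh yh s) = dh s ∧
    decide (p.1 ⟨s, s.isLt.trans ht⟩ ≤ mth M xh dh yh s) = yh s}

/-- The `(U,V)`-part of the event together with `V_t ≤ c`. -/
def S2set (M : DynModel T Ω) {t : ℕ} (ht : t < T) (zh xh : Fin t → ℝ)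
    (dh yh : Fin t → Bool) (c : ℝ) : Set ((Fin T → ℝ) × (Fin T → ℝ)) :=
  S2bset M ht zh xh dh yh ∩ {p | p.2 ⟨t, ht⟩ ≤ c}

/-- The regime extending the treatment history `dh`. -/
def dreg {t : ℕ} (dh : Fin t → Bool) : ℕ → Bool :=
  fun s => if h : s < t then dh ⟨s, h⟩ else false

lemma dreg_eq {t : ℕ} (dh : Fin t → Bool) (s : Fin t) : dreg dh (s : ℕ) = dh s := by
  simp [dreg, s.isLt]

lemma measDecideSet (c : ℝ) (b : Bool) : MeasurableSet {x : ℝ | decide (x ≤ c) = b} := by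
  cases b
  · have : {x : ℝ | decide (x ≤ c) = false} = (Set.Iic c)ᶜ := by
      ext x; simp
    rw [this]; exact measurableSet_Iic.compl
  · have : {x : ℝ | decide (x ≤ c) = true} = Set.Iic c := by
      ext x; simp
    rw [this]; exact measurableSet_Iic

lemma measS1 {T t : ℕ} (ht : t < T) (zh xh : Fin t → ℝ) (z : ℝ) :
    MeasurableSet (S1set ht zh xh z) := by
  have hm1 : ∀ i : Fin T, Measurable fun q : (Fin T → ℝ) × (Fin T → ℝ) => q.1 i :=
    fun i => (measurable_pi_apply i).comp measurable_fst
  have hm2 : ∀ i : Fin T, Measurable fun q : (Fin T → ℝ) × (Fin T → ℝ) => q.2 i :=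
    fun i => (measurable_pi_apply i).comp measurable_snd
  have h1 : MeasurableSet {q : (Fin T → ℝ) × (Fin T → ℝ) |
      ∀ s : Fin t, q.1 ⟨s, s.isLt.trans ht⟩ = zh s ∧ q.2 ⟨s, s.isLt.trans ht⟩ = xh s} := by
    rw [Set.setOf_forall]
    refine MeasurableSet.iInter fun s => ?_
    exact MeasurableSet.inter
      (hm1 _ (measurableSet_singleton (zh s)))
      (hm2 _ (measurableSet_singleton (xh s)))
  exact h1.inter (hm1 _ (measurableSet_singleton z))

lemma measS2b (M : DynModel T Ω) {t : ℕ} (ht : t < T) (zh xh : Fin t → ℝ)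
    (dh yh : Fin t → Bool) : MeasurableSet (S2bset M ht zh xh dh yh) := by
  have hm1 : ∀ i : Fin T, Measurable fun q : (Fin T → ℝ) × (Fin T → ℝ) => q.1 i :=
    fun i => (measurable_pi_apply i).comp measurable_fst
  have hm2 : ∀ i : Fin T, Measurable fun q : (Fin T → ℝ) × (Fin T → ℝ) => q.2 i :=
    fun i => (measurable_pi_apply i).comp measurable_snd
  rw [S2bset, Set.setOf_forall]
  refine MeasurableSet.iInter fun s => ?_
  exact MeasurableSet.inter
    (hm2 _ (measDecideSet _ _))
    (hm1 _ (measDecideSet _ _))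

lemma measS2 (M : DynModel T Ω) {t : ℕ} (ht : t < T) (zh xh : Fin t → ℝ)
    (dh yh : Fin t → Bool) (c : ℝ) : MeasurableSet (S2set M ht zh xh dh yh c) :=
  (measS2b M ht zh xh dh yh).inter
    (((measurable_pi_apply (⟨t, ht⟩ : Fin T)).comp
      (measurable_snd : Measurable fun q : (Fin T → ℝ) × (Fin T → ℝ) => q.2)) measurableSet_Iic)

/-- Factorization of the conditioning event. -/
lemma histEvent_eq (M : DynModel T Ω) {t : ℕ} (ht : t < T) (zh xh : Fin t → ℝ)
    (dh yh : Fin t → Bool) (z : ℝ) :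
    histEvent M t zh xh dh yh z =
      (fun ω => ((fun s : Fin T => M.Z s ω), (fun s : Fin T => M.X s ω))) ⁻¹'
        S1set ht zh xh z ∩
      (fun ω => ((fun s : Fin T => M.U s (dreg dh s) ω), (fun s : Fin T => M.V s ω))) ⁻¹'
        S2bset M ht zh xh dh yh := by
  ext ω
  simp only [histEvent, S1set, S2bset, Set.mem_inter_iff, Set.mem_preimage, Set.mem_setOf_eq]
  constructor
  · rintro ⟨h1, h2⟩
    have hz : ∀ s : Fin t, M.Z s ω = zh s := fun s => (h1 s).1
    have hx : ∀ s : Fin t, M.X s ω = xh s := fun s => (h1 s).2.1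
    have hB := (histChar M ht zh xh dh yh ω hz hx t le_rfl).mp
      (fun s _ => ⟨(h1 s).2.2.1, (h1 s).2.2.2⟩)
    refine ⟨⟨fun s => ⟨hz s, hx s⟩, h2⟩, fun s => ?_⟩
    have hBs := hB s s.isLt
    rw [Bcond] at hBs
    refine ⟨hBs.1, ?_⟩
    simp only [dreg_eq]
    exact hBs.2
  · rintro ⟨⟨h1, h2⟩, h3⟩
    have hz : ∀ s : Fin t, M.Z s ω = zh s := fun s => (h1 s).1
    have hx : ∀ s : Fin t, M.X s ω = xh s := fun s => (h1 s).2
    have hB : ∀ s : Fin t, Bcond M zh xh dh yh s ω := by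
      intro s
      have h3s := h3 s
      simp only [dreg_eq] at h3s
      exact ⟨h3s.1, h3s.2⟩
    have hDY := (histChar M ht zh xh dh yh ω hz hx t le_rfl).mpr (fun s _ => hB s)
    exact ⟨fun s => ⟨hz s, hx s, (hDY s s.isLt).1, (hDY s s.isLt).2⟩, h2⟩

/-- On the conditioning event, `D_t` is determined by `V_t` and the threshold. -/
lemma Dt_eq (M : DynModel T Ω) {t : ℕ} (ht : t < T) (zh xh : Fin t → ℝ)
    (dh yh : Fin t → Bool) (z : ℝ) (ω : Ω) (hA : ω ∈ histEvent M t zh xh dh yh z) :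
    M.D t ω = decide (M.V t ω ≤ M.πf t yh dh z) := by
  have h1 : (fun s : Fin t => M.Y s ω) = yh := funext fun s => (hA.1 s).2.2.2
  have h2 : (fun s : Fin t => M.D s ω) = dh := funext fun s => (hA.1 s).2.2.1
  rw [M.eqD t ht ω, h1, h2, hA.2]

/-- Factorization of the conditioning event intersected with `{D_t = 1}`. -/
lemma histEventD_eq (M : DynModel T Ω) {t : ℕ} (ht : t < T) (zh xh : Fin t → ℝ)
    (dh yh : Fin t → Bool) (z : ℝ) :
    histEvent M t zh xh dh yh z ∩ {ω | M.D t ω = true} =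
      (fun ω => ((fun s : Fin T => M.Z s ω), (fun s : Fin T => M.X s ω))) ⁻¹'
        S1set ht zh xh z ∩
      (fun ω => ((fun s : Fin T => M.U s (dreg dh s) ω), (fun s : Fin T => M.V s ω))) ⁻¹'
        S2set M ht zh xh dh yh (M.πf t yh dh z) := by
  ext ω
  simp only [Set.mem_inter_iff, Set.mem_setOf_eq, Set.mem_preimage, S2set]
  constructor
  · rintro ⟨hA, hD⟩
    have hm := (Set.ext_iff.mp (histEvent_eq M ht zh xh dh yh z) ω).mp hA
    refine ⟨hm.1, hm.2, ?_⟩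
    rw [Dt_eq M ht zh xh dh yh z ω hA] at hD
    exact of_decide_eq_true hD
  · rintro ⟨h1, h2, h3⟩
    have hA : ω ∈ histEvent M t zh xh dh yh z :=
      (Set.ext_iff.mp (histEvent_eq M ht zh xh dh yh z) ω).mpr ⟨h1, h2⟩
    refine ⟨hA, ?_⟩
    rw [Dt_eq M ht zh xh dh yh z ω hA]
    exact decide_eq_true h3

end DynAux

/-- if the propensity of treatment is strictly larger at `z_t` than at `z̃_t`
(conditional on the same history), then `π_t(y^{t−1}, d^{t−1}, z_t) > π_t(y^{t−1}, d^{t−1}, z̃_t)`. -/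
theorem statement3 {T : ℕ} {Ω : Type} [MeasurableSpace Ω]
    (M : DynModel T Ω) (hC : AssmC M) (hSX : AssmSX M)
    (t : ℕ) (ht : t < T) (zh xh : Fin t → ℝ) (dh yh : Fin t → Bool) (zt zt' : ℝ)
    (hpos : 0 < M.P (histEvent M t zh xh dh yh zt))
    (hpos' : 0 < M.P (histEvent M t zh xh dh yh zt'))
    (hgt : ProbabilityTheory.cond M.P (histEvent M t zh xh dh yh zt) {ω | M.D t ω = true}
        > ProbabilityTheory.cond M.P (histEvent M t zh xh dh yh zt') {ω | M.D t ω = true}) :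
    M.πf t yh dh zt > M.πf t yh dh zt' := by
  by_contra hle
  push_neg at hle
  haveI := M.probP
  have hind := hSX (DynAux.dreg dh)
  have hfm : Measurable (fun ω =>
      ((fun s : Fin T => M.Z s ω), (fun s : Fin T => M.X s ω)) :
      Ω → (Fin T → ℝ) × (Fin T → ℝ)) :=
    (measurable_pi_lambda _ fun s : Fin T => M.measZ (s : ℕ)).prodMk
      (measurable_pi_lambda _ fun s : Fin T => M.measX (s : ℕ))
  have hgm : Measurable (fun ω =>
      ((fun s : Fin T => M.U s (DynAux.dreg dh s) ω), (fun s : Fin T => M.V s ω)) :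
      Ω → (Fin T → ℝ) × (Fin T → ℝ)) :=
    (measurable_pi_lambda _ fun s : Fin T => M.measU (s : ℕ) _).prodMk
      (measurable_pi_lambda _ fun s : Fin T => M.measV (s : ℕ))
  set f : Ω → (Fin T → ℝ) × (Fin T → ℝ) :=
    fun ω => ((fun s : Fin T => M.Z s ω), (fun s : Fin T => M.X s ω)) with hfdef
  set g : Ω → (Fin T → ℝ) × (Fin T → ℝ) :=
    fun ω => ((fun s : Fin T => M.U s (DynAux.dreg dh s) ω), (fun s : Fin T => M.V s ω))
    with hgdef
  have hb : ∀ z, M.P (histEvent M t zh xh dh yh z) =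
      M.P (f ⁻¹' DynAux.S1set ht zh xh z) *
        M.P (g ⁻¹' DynAux.S2bset M ht zh xh dh yh) := by
    intro z
    rw [DynAux.histEvent_eq M ht zh xh dh yh z]
    exact hind.measure_inter_preimage_eq_mul _ _ (DynAux.measS1 ht zh xh z)
      (DynAux.measS2b M ht zh xh dh yh)
  have hbd : ∀ z, M.P (histEvent M t zh xh dh yh z ∩ {ω | M.D t ω = true}) =
      M.P (f ⁻¹' DynAux.S1set ht zh xh z) *
        M.P (g ⁻¹' DynAux.S2set M ht zh xh dh yh (M.πf t yh dh z)) := by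
    intro z
    rw [DynAux.histEventD_eq M ht zh xh dh yh z]
    exact hind.measure_inter_preimage_eq_mul _ _ (DynAux.measS1 ht zh xh z)
      (DynAux.measS2 M ht zh xh dh yh _)
  have hcond : ∀ z, 0 < M.P (histEvent M t zh xh dh yh z) →
      ProbabilityTheory.cond M.P (histEvent M t zh xh dh yh z) {ω | M.D t ω = true} =
        (M.P (g ⁻¹' DynAux.S2bset M ht zh xh dh yh))⁻¹ *
          M.P (g ⁻¹' DynAux.S2set M ht zh xh dh yh (M.πf t yh dh z)) := by
    intro z hz
    have hmeasA : MeasurableSet (histEvent M t zh xh dh yh z) := by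
      rw [DynAux.histEvent_eq M ht zh xh dh yh z]
      exact (hfm (DynAux.measS1 ht zh xh z)).inter (hgm (DynAux.measS2b M ht zh xh dh yh))
    rw [cond_apply hmeasA, hbd z, hb z]
    set a := M.P (f ⁻¹' DynAux.S1set ht zh xh z) with hadef
    have ha0 : a ≠ 0 := by
      intro h
      rw [hb z, ← hadef, h, zero_mul] at hz
      exact lt_irrefl 0 hz
    have hatop : a ≠ ⊤ := measure_ne_top _ _
    rw [ENNReal.mul_inv (Or.inl ha0) (Or.inl hatop), mul_mul_mul_comm,
      ENNReal.inv_mul_cancel ha0 hatop, one_mul]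
  rw [hcond zt hpos, hcond zt' hpos'] at hgt
  have hmono : DynAux.S2set M ht zh xh dh yh (M.πf t yh dh zt) ⊆
      DynAux.S2set M ht zh xh dh yh (M.πf t yh dh zt') :=
    Set.inter_subset_inter_right _ (fun p hp => le_trans hp hle)
  exact absurd hgt
    (not_lt.mpr (mul_le_mul_right (measure_mono (Set.preimage_mono hmono)) _))
end

section
/- In the dynamic structural model under Assumptions C and SX, fix t ≥ 2 and (z^{t−1}, x^{t−1}, d^{t−1}, y^{t−1}) with positive conditioning probability; write π_t := π_t(y^{t−1}, d^{t−1}, z_t) and π̃_t := π_t(y^{t−1}, d^{t−1}, z̃_t) and assume π̃_t ≤ π_t. Then h_t(z_t, z̃_t, x_t, x̃_t; z^{t−1}, x^{t−1}, d^{t−1}, y^{t−1}) = Pr[U_t(1) ≤ μ_t(y^{t−1}, d^{t−1}, 1, x_t) and π̃_t ≤ V_t ≤ π_t | A] − Pr[U_t(0) ≤ μ_t(y^{t−1}, d^{t−1}, 0, x̃_t) and π̃_t ≤ V_t ≤ π_t | A], where A is the event {Z^{t−1} = z^{t−1}, X^{t−1} = x^{t−1}, V^{t−1} ∈ 𝒱^{t−1}(d^{t−1},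 U^{t−2}(d^{t−2}); z^{t−1}, x^{t−2}), U^{t−1}(d^{t−1}) ∈ 𝒰^{t−1}(d^{t−1}, y^{t−1}; x^{t−1})}. -/
open MeasureTheory ProbabilityTheory
open scoped ENNReal

namespace DynModel

variable {T : ℕ} {Ω : Type} [MeasurableSpace Ω]

/-- The deterministic outcome path `y_t(u; d, x)` generated by the structural functions from
unobservables `u`, regime `d` and exogenous path `x`. -/
noncomputable def ydet (M : DynModel T Ω) (u : ℕ → ℝ) (d : ℕ → Bool) (x : ℕ → ℝ) (t : ℕ) :
    Bool :=
  decide (u t ≤ M.μf t (fun s : Fin t => M.ydet u d x s) (fun s : Fin (t + 1) => d s) (x t))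
termination_by t
decreasing_by all_goals exact s.isLt

end DynModel

open DynModel

/-- The conditioning event `{Z^{t−1} = z^{t−1}, Z_t = z_t, X^{t−1} = x^{t−1}, X_t = x_t,
D^{t−1} = d^{t−1}, Y^{t−1} = y^{t−1}}`. -/
def fullHistEvent {T : ℕ} {Ω : Type} [MeasurableSpace Ω] (M : DynModel T Ω) (t : ℕ)
    (zh xh : Fin t → ℝ) (dh yh : Fin t → Bool) (zt xt : ℝ) : Set Ω :=
  {ω | (∀ s : Fin t, M.Z s ω = zh s ∧ M.X s ω = xh s ∧ M.D s ω = dh s ∧ M.Y s ω = yh s) ∧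
    M.Z t ω = zt ∧ M.X t ω = xt}

namespace DynModel

variable {T : ℕ} {Ω : Type} [MeasurableSpace Ω]

lemma ydet_congr (M : DynModel T Ω) (u u' : ℕ → ℝ) (d d' : ℕ → Bool) (x x' : ℕ → ℝ) :
    ∀ s : ℕ, (∀ r, r ≤ s → u r = u' r) → (∀ r, r ≤ s → d r = d' r) → (∀ r, r ≤ s → x r = x' r) →
    M.ydet u d x s = M.ydet u' d' x' s := by
  intro s
  induction s using Nat.strong_induction_on with
  | _ s ih =>
    intro hu hd hx
    have h2 : (fun r : Fin s => M.ydet u d x r) = fun r : Fin s => M.ydet u' d' x' r :=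
      funext fun r => ih r r.isLt (fun q hq => hu q (le_of_lt (lt_of_le_of_lt hq r.isLt)))
        (fun q hq => hd q (le_of_lt (lt_of_le_of_lt hq r.isLt)))
        (fun q hq => hx q (le_of_lt (lt_of_le_of_lt hq r.isLt)))
    have h3 : (fun r : Fin (s+1) => d r) = fun r : Fin (s+1) => d' r :=
      funext fun r => hd r (Nat.lt_succ_iff.mp r.isLt)
    rw [ydet, ydet, hu s le_rfl, h2, h3, hx s le_rfl]

lemma ydet_measurable (M : DynModel T Ω) {α : Type*} [MeasurableSpace α]
    (u : α → ℕ → ℝ) (hu : ∀ r, Measurable fun a => u a r) (d : ℕ → Bool) (x : ℕ → ℝ) :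
    ∀ s : ℕ, Measurable fun a => M.ydet (u a) d x s := by
  intro s
  induction s using Nat.strong_induction_on with
  | _ s ih =>
    have hvec : Measurable fun a => (fun r : Fin s => M.ydet (u a) d x r) :=
      measurable_pi_lambda _ fun r => ih r r.isLt
    have hmu : Measurable fun a =>
        M.μf s (fun r : Fin s => M.ydet (u a) d x r) (fun r : Fin (s+1) => d r) (x s) :=
      (Measurable.of_discrete (f := fun v : Fin s → Bool =>
        M.μf s v (fun r : Fin (s+1) => d r) (x s))).comp hvec
    have : (fun a => M.ydet (u a) d x s) = fun a =>
        decide (u a s ≤ M.μf s (fun r : Fin s => M.ydet (u a) d x r)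
          (fun r : Fin (s+1) => d r) (x s)) := by
      funext a; rw [ydet]
    rw [this]
    apply measurable_to_countable'
    intro b
    cases b
    · have he : (fun a => decide (u a s ≤ M.μf s (fun r : Fin s => M.ydet (u a) d x r)
          (fun r : Fin (s+1) => d r) (x s))) ⁻¹' {false} =
          {a | ¬ (u a s ≤ _root_.id (M.μf s (fun r : Fin s => M.ydet (u a) d x r)
          (fun r : Fin (s+1) => d r) (x s)))} := by
        ext a; simp
      rw [he]; exact (measurableSet_le (hu s) hmu).compl
    · have he : (fun a => decide (u a s ≤ M.μf s (fun r : Fin s => M.ydet (u a) d x r)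
          (fun r : Fin (s+1) => d r) (x s))) ⁻¹' {true} =
          {a | u a s ≤ M.μf s (fun r : Fin s => M.ydet (u a) d x r)
          (fun r : Fin (s+1) => d r) (x s)} := by
        ext a; simp
      rw [he]; exact measurableSet_le (hu s) hmu

end DynModel

namespace DynModel

variable {T : ℕ} {Ω : Type} [MeasurableSpace Ω]

lemma hist_equiv (M : DynModel T Ω) (t : ℕ) (ht : t < T)
    (zh xh : Fin t → ℝ) (dh yh : Fin t → Bool)
    (de : ℕ → Bool) (hde : ∀ s : Fin t, de s = dh s)
    (xe : ℕ → ℝ) (hxe : ∀ s : Fin t, xe s = xh s)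
    (ω : Ω) (hzx : ∀ s : Fin t, M.Z s ω = zh s ∧ M.X s ω = xh s) :
    (∀ s : Fin t, M.D s ω = dh s ∧ M.Y s ω = yh s) ↔
      ((∀ s : Fin t, M.ydet (fun r => M.U r (de r) ω) de xe s = yh s) ∧
       (∀ s : Fin t, dh s = decide (M.V s ω ≤
          M.πf s (fun r : Fin (s : ℕ) => M.ydet (fun r' => M.U r' (de r') ω) de xe r)
            (fun r : Fin (s : ℕ) => dh ⟨r, lt_trans r.isLt s.isLt⟩) (zh s)))) := by
  set uω : ℕ → ℝ := fun r => M.U r (de r) ω with huω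
  constructor
  · intro hDY
    have key : ∀ s, ∀ hs : s < t, M.ydet uω de xe s = M.Y s ω := by
      intro s
      induction s using Nat.strong_induction_on with
      | _ s ih =>
        intro hs
        have hYs := M.eqY s (lt_trans hs ht) ω
        have e1 : uω s = M.U s (M.D s ω) ω := by
          have h1 : de s = dh ⟨s, hs⟩ := hde ⟨s, hs⟩
          have h2 : M.D s ω = dh ⟨s, hs⟩ := (hDY ⟨s, hs⟩).1
          show M.U s (de s) ω = _
          rw [h1, ← h2]
        have e2 : (fun r : Fin s => M.ydet uω de xe r) = fun r : Fin s => M.Y r ω :=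
          funext fun r => ih r r.isLt (lt_trans r.isLt hs)
        have e3 : (fun r : Fin (s+1) => de r) = fun r : Fin (s+1) => M.D r ω := by
          funext r
          have hr : (r : ℕ) < t := lt_of_le_of_lt (Nat.lt_succ_iff.mp r.isLt) hs
          have h1 : de r = dh ⟨r, hr⟩ := hde ⟨r, hr⟩
          have h2 : M.D r ω = dh ⟨r, hr⟩ := (hDY ⟨r, hr⟩).1
          rw [h1, ← h2]
        have e4 : xe s = M.X s ω := by
          have h1 : xe s = xh ⟨s, hs⟩ := hxe ⟨s, hs⟩
          have h2 : M.X s ω = xh ⟨s, hs⟩ := (hzx ⟨s, hs⟩).2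
          rw [h1, ← h2]
        rw [ydet, e1, e2, e3, e4, ← hYs]
    refine ⟨fun s => (key s s.isLt).trans (hDY s).2, fun s => ?_⟩
    have hDs := M.eqD s (lt_trans s.isLt ht) ω
    have e2 : (fun r : Fin (s : ℕ) => M.Y r ω) =
        fun r : Fin (s : ℕ) => M.ydet uω de xe r :=
      funext fun r => (key r (lt_trans r.isLt s.isLt)).symm
    have e3 : (fun r : Fin (s : ℕ) => M.D r ω) =
        fun r : Fin (s : ℕ) => dh ⟨r, lt_trans r.isLt s.isLt⟩ :=
      funext fun r => (hDY ⟨r, lt_trans r.isLt s.isLt⟩).1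
    have e4 : M.Z s ω = zh s := (hzx s).1
    rw [← (hDY s).1, hDs, e2, e3, e4]
  · rintro ⟨hy, hd⟩
    have key2 : ∀ s, ∀ hs : s < t, M.D s ω = dh ⟨s, hs⟩ ∧ M.Y s ω = yh ⟨s, hs⟩ := by
      intro s
      induction s using Nat.strong_induction_on with
      | _ s ih =>
        intro hs
        have hDs := M.eqD s (lt_trans hs ht) ω
        have e2 : (fun r : Fin s => M.Y r ω) = fun r : Fin s => M.ydet uω de xe r := by
          funext r
          have h1 := (ih r r.isLt (lt_trans r.isLt hs)).2
          have h2 : M.ydet uω de xe r = yh ⟨r, lt_trans r.isLt hs⟩ :=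
            hy ⟨r, lt_trans r.isLt hs⟩
          rw [h1, ← h2]
        have e3 : (fun r : Fin s => M.D r ω) =
            fun r : Fin s => dh ⟨r, lt_trans r.isLt hs⟩ :=
          funext fun r => (ih r r.isLt (lt_trans r.isLt hs)).1
        have e4 : M.Z s ω = zh ⟨s, hs⟩ := (hzx ⟨s, hs⟩).1
        have hdd : dh ⟨s, hs⟩ = decide (M.V s ω ≤
            M.πf s (fun r : Fin s => M.ydet uω de xe r)
              (fun r : Fin s => dh ⟨r, lt_trans r.isLt hs⟩) (zh ⟨s, hs⟩)) := hd ⟨s, hs⟩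
        have hD : M.D s ω = dh ⟨s, hs⟩ := by rw [hDs, e2, e3, e4, ← hdd]
        refine ⟨hD, ?_⟩
        have hYs := M.eqY s (lt_trans hs ht) ω
        have e1 : M.U s (M.D s ω) ω = uω s := by
          have h1 : de s = dh ⟨s, hs⟩ := hde ⟨s, hs⟩
          show _ = M.U s (de s) ω
          rw [h1, hD]
        have e5 : (fun r : Fin (s+1) => M.D r ω) = fun r : Fin (s+1) => de r := by
          funext r
          rcases Nat.lt_succ_iff_lt_or_eq.mp r.isLt with hr | hr
          · have h1 := (ih r hr (lt_trans hr hs)).1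
            have h2 : de r = dh ⟨r, lt_trans hr hs⟩ := hde ⟨r, lt_trans hr hs⟩
            rw [h1, ← h2]
          · have h1 : M.D r ω = M.D s ω := by rw [hr]
            have h2 : de (r : ℕ) = de s := by rw [hr]
            have h3 : de s = dh ⟨s, hs⟩ := hde ⟨s, hs⟩
            rw [h1, hD, h2, h3]
        have e6 : M.X s ω = xe s := by
          have h1 : xe s = xh ⟨s, hs⟩ := hxe ⟨s, hs⟩
          have h2 : M.X s ω = xh ⟨s, hs⟩ := (hzx ⟨s, hs⟩).2
          rw [h1, ← h2]
        have e7 : (fun r : Fin s => M.Y r ω) = fun r : Fin s => M.ydet uω de xe r := e2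
        rw [hYs, e1, e7, e5, e6, ← ydet]
        exact hy ⟨s, hs⟩
    exact fun s => ⟨(key2 s s.isLt).1, (key2 s s.isLt).2⟩

end DynModel

namespace DynModel

variable {T : ℕ} {Ω : Type} [MeasurableSpace Ω]

lemma measurable_decide_le {α : Type*} [MeasurableSpace α] {f g : α → ℝ}
    (hf : Measurable f) (hg : Measurable g) :
    Measurable (fun a => decide (f a ≤ g a)) := by
  apply measurable_to_countable'
  intro b
  cases b
  · have he : (fun a => decide (f a ≤ g a)) ⁻¹' {false} = {a | f a ≤ g a}ᶜ := by
      ext a; simp [Set.mem_compl_iff]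
    rw [he]; exact (measurableSet_le hf hg).compl
  · have he : (fun a => decide (f a ≤ g a)) ⁻¹' {true} = {a | f a ≤ g a} := by
      ext a; simp
    rw [he]; exact measurableSet_le hf hg

lemma timeT (M : DynModel T Ω) (t : ℕ) (ht : t < T)
    (dh yh : Fin t → Bool) (z x : ℝ) (ω : Ω)
    (hDY : ∀ s : Fin t, M.D s ω = dh s ∧ M.Y s ω = yh s)
    (hz : M.Z t ω = z) (hx : M.X t ω = x) :
    M.D t ω = decide (M.V t ω ≤ M.πf t yh dh z) ∧
    ∀ b : Bool, M.D t ω = b →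
      M.Y t ω = decide (M.U t b ω ≤ M.μf t yh (Fin.snoc dh b) x) := by
  have eYh : (fun s : Fin t => M.Y s ω) = yh := funext fun s => (hDY s).2
  have eDh : (fun s : Fin t => M.D s ω) = dh := funext fun s => (hDY s).1
  constructor
  · have eD := M.eqD t ht ω
    rw [eD, eYh, eDh, hz]
  · intro b hb
    have eY := M.eqY t ht ω
    have esnoc : (fun s : Fin (t+1) => M.D s ω) = Fin.snoc dh b := by
      funext r
      refine Fin.lastCases ?_ ?_ r
      · rw [Fin.snoc_last]
        show M.D ((Fin.last t : Fin (t+1)) : ℕ) ω = b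
        rw [Fin.val_last]; exact hb
      · intro i
        rw [Fin.snoc_castSucc]
        show M.D ((Fin.castSucc i : Fin (t+1)) : ℕ) ω = dh i
        rw [Fin.coe_castSucc]; exact (hDY i).1
    rw [eY, hb, eYh, esnoc, hx]

end DynModel

section Helpers

open MeasureTheory

lemma band_lemma {Ω : Type} [MeasurableSpace Ω] (P : Measure Ω) (v : Ω → ℝ)
    (hv : Measurable v) (K : Set Ω) (hK : MeasurableSet K) (a b : ℝ) (hab : a ≤ b)
    (hnull : P {ω | v ω = a} = 0) :
    P (K ∩ {ω | v ω ≤ b}) = P (K ∩ {ω | v ω ≤ a}) + P (K ∩ {ω | a ≤ v ω ∧ v ω ≤ b}) ∧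
    P (K ∩ {ω | ¬ v ω ≤ a}) = P (K ∩ {ω | ¬ v ω ≤ b}) + P (K ∩ {ω | a ≤ v ω ∧ v ω ≤ b}) := by
  have hmIoc : MeasurableSet {ω | a < v ω ∧ v ω ≤ b} :=
    (measurableSet_lt measurable_const hv).inter (measurableSet_le hv measurable_const)
  have hioc : P (K ∩ {ω | a < v ω ∧ v ω ≤ b}) = P (K ∩ {ω | a ≤ v ω ∧ v ω ≤ b}) := by
    apply le_antisymm
    · exact measure_mono fun ω h => ⟨h.1, le_of_lt h.2.1, h.2.2⟩
    · calc P (K ∩ {ω | a ≤ v ω ∧ v ω ≤ b})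
          ≤ P ((K ∩ {ω | a < v ω ∧ v ω ≤ b}) ∪ {ω | v ω = a}) := by
            apply measure_mono
            rintro ω ⟨hk, h1, h2⟩
            rcases eq_or_lt_of_le h1 with h | h
            · exact Or.inr h.symm
            · exact Or.inl ⟨hk, h, h2⟩
        _ ≤ P (K ∩ {ω | a < v ω ∧ v ω ≤ b}) + P {ω | v ω = a} := measure_union_le _ _
        _ = P (K ∩ {ω | a < v ω ∧ v ω ≤ b}) := by rw [hnull, add_zero]
  constructor
  · have hU : K ∩ {ω | v ω ≤ b} =
        (K ∩ {ω | v ω ≤ a}) ∪ (K ∩ {ω | a < v ω ∧ v ω ≤ b}) := by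
      ext ω
      constructor
      · rintro ⟨hk, hvb⟩
        rcases le_or_gt (v ω) a with h | h
        · exact Or.inl ⟨hk, h⟩
        · exact Or.inr ⟨hk, h, hvb⟩
      · rintro (⟨hk, h⟩ | ⟨hk, h1, h2⟩)
        · exact ⟨hk, le_trans h hab⟩
        · exact ⟨hk, h2⟩
    have hdisj : Disjoint (K ∩ {ω | v ω ≤ a}) (K ∩ {ω | a < v ω ∧ v ω ≤ b}) := by
      rw [Set.disjoint_left]
      rintro ω ⟨_, h1⟩ ⟨_, h2, _⟩
      exact absurd h1 (not_le_of_gt h2)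
    rw [hU, measure_union hdisj (hK.inter hmIoc), hioc]
  · have hU : K ∩ {ω | ¬ v ω ≤ a} =
        (K ∩ {ω | ¬ v ω ≤ b}) ∪ (K ∩ {ω | a < v ω ∧ v ω ≤ b}) := by
      ext ω
      constructor
      · rintro ⟨hk, hva⟩
        rcases le_or_gt (v ω) b with h | h
        · exact Or.inr ⟨hk, lt_of_not_ge hva, h⟩
        · exact Or.inl ⟨hk, not_le_of_gt h⟩
      · rintro (⟨hk, h⟩ | ⟨hk, h1, h2⟩)
        · exact ⟨hk, fun hle => h (le_trans hle hab)⟩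
        · exact ⟨hk, not_le_of_gt h1⟩
    have hdisj : Disjoint (K ∩ {ω | ¬ v ω ≤ b}) (K ∩ {ω | a < v ω ∧ v ω ≤ b}) := by
      rw [Set.disjoint_left]
      rintro ω ⟨_, h1⟩ ⟨_, _, h2⟩
      exact h1 h2
    rw [hU, measure_union hdisj (hK.inter hmIoc), hioc]

lemma volume_snd_eq_zero (T : ℕ) (i : Fin T) (c : ℝ) :
    (volume : Measure ((Fin T → ℝ) × (Fin T → ℝ))) {p | p.2 i = c} = 0 := by
  have h1 : {p : (Fin T → ℝ) × (Fin T → ℝ) | p.2 i = c} =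
      Set.univ ×ˢ {v | v i = c} := by
    ext p; simp [Set.mem_prod]
  rw [h1, Measure.volume_eq_prod, Measure.prod_prod]
  have h2 : {v : Fin T → ℝ | v i = c} =
      Set.pi Set.univ (fun j => if j = i then {c} else Set.univ) := by
    ext v
    simp only [Set.mem_setOf_eq, Set.mem_pi, Set.mem_univ, forall_true_left]
    constructor
    · intro h j; by_cases hji : j = i <;> simp [hji, h]
    · intro h; have := h i; simpa using this
  rw [h2, volume_pi_pi]
  rw [mul_eq_zero]
  right
  refine Finset.prod_eq_zero (Finset.mem_univ i) ?_
  simp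

lemma ennreal_ratio_toReal (e c q : ℝ≥0∞) (he : e ≠ 0) (he' : e ≠ ⊤) (hc : c ≠ 0)
    (hc' : c ≠ ⊤) (hq' : q ≠ ⊤) :
    ((e * c)⁻¹ * (e * q)).toReal = c.toReal⁻¹ * q.toReal := by
  rw [ENNReal.toReal_mul, ENNReal.toReal_inv, ENNReal.toReal_mul, ENNReal.toReal_mul]
  have her : e.toReal ≠ 0 := ENNReal.toReal_ne_zero.mpr ⟨he, he'⟩
  rw [mul_inv]
  rw [mul_comm e.toReal⁻¹ c.toReal⁻¹, mul_assoc, ← mul_assoc e.toReal⁻¹,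
    inv_mul_cancel₀ her, one_mul]

end Helpers


/-- decomposition of `h_t` as a difference of two conditional probabilities on the
event `A` defined by the `U`- and `V`-sets. -/
theorem statement4 {T : ℕ} {Ω : Type} [MeasurableSpace Ω]
    (M : DynModel T Ω) (hC : AssmC M) (hSX : AssmSX M)
    (t : ℕ) (ht1 : 1 ≤ t) (ht : t < T)
    (zh xh : Fin t → ℝ) (dh yh : Fin t → Bool) (zt ztt xt xtt : ℝ)
    -- extensions of the fixed histories to full paths (only coordinates `< t` are ever used)
    (de : ℕ → Bool) (hde : ∀ s : Fin t, de s = dh s)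
    (xe : ℕ → ℝ) (hxe : ∀ s : Fin t, xe s = xh s)
    -- `π_t` and `π̃_t`, with `π̃_t ≤ π_t`
    (hππ : M.πf t yh dh ztt ≤ M.πf t yh dh zt)
    -- positive probability of all conditioning events
    (hpos1 : 0 < M.P (fullHistEvent M t zh xh dh yh zt xt))
    (hpos2 : 0 < M.P (fullHistEvent M t zh xh dh yh zt xtt))
    (hpos3 : 0 < M.P (fullHistEvent M t zh xh dh yh ztt xt))
    (hpos4 : 0 < M.P (fullHistEvent M t zh xh dh yh ztt xtt))
    (hposA : 0 < M.P
      {ω | (∀ s : Fin t, M.Z s ω = zh s ∧ M.X s ω = xh s) ∧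
        (∀ s : Fin t, M.ydet (fun r => M.U r (de r) ω) de xe s = yh s) ∧
        (∀ s : Fin t, dh s = decide (M.V s ω ≤
          M.πf s (fun r : Fin (s : ℕ) => M.ydet (fun r' => M.U r' (de r') ω) de xe r)
            (fun r : Fin (s : ℕ) => dh ⟨r, lt_trans r.isLt s.isLt⟩) (zh s)))}) :
    (ProbabilityTheory.cond M.P (fullHistEvent M t zh xh dh yh zt xt)
        {ω | M.Y t ω = true ∧ M.D t ω = true}).toReal
      + (ProbabilityTheory.cond M.P (fullHistEvent M t zh xh dh yh zt xtt)
        {ω | M.Y t ω = true ∧ M.D t ω = false}).toReal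
      - (ProbabilityTheory.cond M.P (fullHistEvent M t zh xh dh yh ztt xt)
        {ω | M.Y t ω = true ∧ M.D t ω = true}).toReal
      - (ProbabilityTheory.cond M.P (fullHistEvent M t zh xh dh yh ztt xtt)
        {ω | M.Y t ω = true ∧ M.D t ω = false}).toReal
    =
    (ProbabilityTheory.cond M.P
      {ω | (∀ s : Fin t, M.Z s ω = zh s ∧ M.X s ω = xh s) ∧
        (∀ s : Fin t, M.ydet (fun r => M.U r (de r) ω) de xe s = yh s) ∧
        (∀ s : Fin t, dh s = decide (M.V s ω ≤
          M.πf s (fun r : Fin (s : ℕ) => M.ydet (fun r' => M.U r' (de r') ω) de xe r)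
            (fun r : Fin (s : ℕ) => dh ⟨r, lt_trans r.isLt s.isLt⟩) (zh s)))}
      {ω | M.U t true ω ≤ M.μf t yh (Fin.snoc dh true) xt ∧
        M.πf t yh dh ztt ≤ M.V t ω ∧ M.V t ω ≤ M.πf t yh dh zt}).toReal
    -
    (ProbabilityTheory.cond M.P
      {ω | (∀ s : Fin t, M.Z s ω = zh s ∧ M.X s ω = xh s) ∧
        (∀ s : Fin t, M.ydet (fun r => M.U r (de r) ω) de xe s = yh s) ∧
        (∀ s : Fin t, dh s = decide (M.V s ω ≤
          M.πf s (fun r : Fin (s : ℕ) => M.ydet (fun r' => M.U r' (de r') ω) de xe r)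
            (fun r : Fin (s : ℕ) => dh ⟨r, lt_trans r.isLt s.isLt⟩) (zh s)))}
      {ω | M.U t false ω ≤ M.μf t yh (Fin.snoc dh false) xtt ∧
        M.πf t yh dh ztt ≤ M.V t ω ∧ M.V t ω ≤ M.πf t yh dh zt}).toReal := by
  haveI := M.probP
  -- abbreviations
  set π : ℝ := M.πf t yh dh zt with hπdef
  set π' : ℝ := M.πf t yh dh ztt with hπ'def
  set μ1 : ℝ := M.μf t yh (Fin.snoc dh true) xt with hμ1def
  set μ0 : ℝ := M.μf t yh (Fin.snoc dh false) xtt with hμ0def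
  set C : Set Ω := {ω | (∀ s : Fin t, M.ydet (fun r => M.U r (de r) ω) de xe s = yh s) ∧
      (∀ s : Fin t, dh s = decide (M.V s ω ≤
        M.πf s (fun r : Fin (s : ℕ) => M.ydet (fun r' => M.U r' (de r') ω) de xe r)
          (fun r : Fin (s : ℕ) => dh ⟨r, lt_trans r.isLt s.isLt⟩) (zh s)))} with hCdef
  -- the (Z,X) vector and the (U(d'),V) vectors
  set F : Ω → (Fin T → ℝ) × (Fin T → ℝ) :=
    fun ω => ((fun s : Fin T => M.Z s ω), (fun s : Fin T => M.X s ω)) with hFdef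
  set d' : Bool → ℕ → Bool := fun b r => if r = t then b else de r with hd'def
  set g : Bool → Ω → (Fin T → ℝ) × (Fin T → ℝ) :=
    fun b ω => ((fun s : Fin T => M.U s (d' b s) ω), (fun s : Fin T => M.V s ω)) with hgdef
  have hFmeas : Measurable F := by
    rw [hFdef]
    exact (measurable_pi_lambda (fun ω : Ω => fun s : Fin T => M.Z s ω)
        fun s => M.measZ s).prodMk
      (measurable_pi_lambda (fun ω : Ω => fun s : Fin T => M.X s ω) fun s => M.measX s)
  have hgmeas : ∀ b, Measurable (g b) := by
    intro b
    rw [hgdef]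
    exact (measurable_pi_lambda (fun ω : Ω => fun s : Fin T => M.U s (d' b s) ω)
        fun s => M.measU s (d' b s)).prodMk
      (measurable_pi_lambda (fun ω : Ω => fun s : Fin T => M.V s ω) fun s => M.measV s)
  -- product-space sets
  set pe : (Fin T → ℝ) → ℕ → ℝ := fun v r => if h : r < T then v ⟨r, h⟩ else 0 with hpedef
  set RE : ℝ → ℝ → Set ((Fin T → ℝ) × (Fin T → ℝ)) := fun z x =>
    {q | (∀ s : Fin t, q.1 ⟨s, lt_trans s.isLt ht⟩ = zh s ∧ q.2 ⟨s, lt_trans s.isLt ht⟩ = xh s)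
      ∧ q.1 ⟨t, ht⟩ = z ∧ q.2 ⟨t, ht⟩ = x} with hREdef
  set RA : Set ((Fin T → ℝ) × (Fin T → ℝ)) :=
    {q | ∀ s : Fin t, q.1 ⟨s, lt_trans s.isLt ht⟩ = zh s ∧ q.2 ⟨s, lt_trans s.isLt ht⟩ = xh s}
      with hRAdef
  set Sc : Set ((Fin T → ℝ) × (Fin T → ℝ)) :=
    {p | (∀ s : Fin t, M.ydet (pe p.1) de xe s = yh s) ∧
      (∀ s : Fin t, dh s = decide (p.2 ⟨s, lt_trans s.isLt ht⟩ ≤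
        M.πf s (fun r : Fin (s : ℕ) => M.ydet (pe p.1) de xe r)
          (fun r : Fin (s : ℕ) => dh ⟨r, lt_trans r.isLt s.isLt⟩) (zh s)))} with hScdef
  set SW : ℝ → Set ℝ → Set ((Fin T → ℝ) × (Fin T → ℝ)) := fun μv J =>
    Sc ∩ {p | p.1 ⟨t, ht⟩ ≤ μv ∧ p.2 ⟨t, ht⟩ ∈ J} with hSWdef
  -- basic facts about d'
  have hd'lt : ∀ b r, r < t → d' b r = de r := by
    intro b r hr
    simp only [hd'def]
    rw [if_neg (Nat.ne_of_lt hr)]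
  have hd't : ∀ b, d' b t = b := by intro b; simp [hd'def]
  -- ydet congruence for the embedded paths
  have hydcong : ∀ b (ω : Ω) (s : ℕ), s < t →
      M.ydet (pe (fun r : Fin T => M.U r (d' b r) ω)) de xe s =
      M.ydet (fun r => M.U r (de r) ω) de xe s := by
    intro b ω s hs
    apply ydet_congr
    · intro r hr
      have hrT : r < T := lt_trans (lt_of_le_of_lt hr (lt_of_lt_of_le hs le_rfl)) ht
      have hrt : r < t := lt_of_le_of_lt hr hs
      simp only [hpedef]
      rw [dif_pos hrT, hd'lt b r hrt]
    · intro r _; rfl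
    · intro r _; rfl
  -- preimage identities
  have hgSc : ∀ b, (g b) ⁻¹' Sc = C := by
    intro b
    ext ω
    simp only [Set.mem_preimage, hgdef, hScdef, hCdef, Set.mem_setOf_eq]
    constructor
    · rintro ⟨h1, h2⟩
      refine ⟨fun s => ?_, fun s => ?_⟩
      · rw [← hydcong b ω s s.isLt]; exact h1 s
      · have hfun : (fun r : Fin (s : ℕ) =>
            M.ydet (fun r' => M.U r' (de r') ω) de xe r) =
            fun r : Fin (s : ℕ) =>
            M.ydet (pe (fun r' : Fin T => M.U r' (d' b r') ω)) de xe r :=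
          funext fun r => (hydcong b ω r (lt_trans r.isLt s.isLt)).symm
        rw [hfun]; exact h2 s
    · rintro ⟨h1, h2⟩
      refine ⟨fun s => ?_, fun s => ?_⟩
      · rw [hydcong b ω s s.isLt]; exact h1 s
      · have hfun : (fun r : Fin (s : ℕ) =>
            M.ydet (pe (fun r' : Fin T => M.U r' (d' b r') ω)) de xe r) =
            fun r : Fin (s : ℕ) =>
            M.ydet (fun r' => M.U r' (de r') ω) de xe r :=
          funext fun r => hydcong b ω r (lt_trans r.isLt s.isLt)
        rw [hfun]; exact h2 s
  have hgSW : ∀ b μv J, (g b) ⁻¹' (SW μv J) =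
      C ∩ {ω | M.U t b ω ≤ μv ∧ M.V t ω ∈ J} := by
    intro b μv J
    simp only [hSWdef, Set.preimage_inter, hgSc b]
    congr 1
    ext ω
    simp only [Set.mem_preimage, hgdef, Set.mem_setOf_eq, hd't]
  -- measurability of the product-space sets
  have hcoord1 : ∀ i : Fin T, Measurable fun q : (Fin T → ℝ) × (Fin T → ℝ) => q.1 i :=
    fun i => (measurable_pi_apply i).comp measurable_fst
  have hcoord2 : ∀ i : Fin T, Measurable fun q : (Fin T → ℝ) × (Fin T → ℝ) => q.2 i :=
    fun i => (measurable_pi_apply i).comp measurable_snd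
  have hpemeas : ∀ r : ℕ, Measurable fun p : (Fin T → ℝ) × (Fin T → ℝ) => pe p.1 r := by
    intro r
    by_cases h : r < T
    · have he : (fun p : (Fin T → ℝ) × (Fin T → ℝ) => pe p.1 r) = fun p => p.1 ⟨r, h⟩ := by
        funext p; simp [hpedef, h]
      rw [he]; exact hcoord1 _
    · have he : (fun p : (Fin T → ℝ) × (Fin T → ℝ) => pe p.1 r) = fun _ => 0 := by
        funext p; simp [hpedef, h]
      rw [he]; exact measurable_const
  have hydmeas : ∀ s : ℕ, Measurable fun p : (Fin T → ℝ) × (Fin T → ℝ) =>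
      M.ydet (pe p.1) de xe s :=
    fun s => M.ydet_measurable (fun p : (Fin T → ℝ) × (Fin T → ℝ) => pe p.1) hpemeas de xe s
  have hmRE : ∀ z x, MeasurableSet (RE z x) := by
    intro z x
    have he : RE z x =
        (⋂ s : Fin t, ((fun q : (Fin T → ℝ) × (Fin T → ℝ) =>
            q.1 ⟨(s : ℕ), lt_trans s.isLt ht⟩) ⁻¹' {zh s} ∩
          (fun q : (Fin T → ℝ) × (Fin T → ℝ) =>
            q.2 ⟨(s : ℕ), lt_trans s.isLt ht⟩) ⁻¹' {xh s})) ∩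
        ((fun q : (Fin T → ℝ) × (Fin T → ℝ) => q.1 ⟨t, ht⟩) ⁻¹' {z} ∩
          (fun q : (Fin T → ℝ) × (Fin T → ℝ) => q.2 ⟨t, ht⟩) ⁻¹' {x}) := by
      rw [hREdef]
      ext q
      simp only [Set.mem_setOf_eq, Set.mem_inter_iff, Set.mem_iInter, Set.mem_preimage,
        Set.mem_singleton_iff]
    rw [he]
    exact (MeasurableSet.iInter fun s =>
        ((hcoord1 _) (measurableSet_singleton _)).inter
          ((hcoord2 _) (measurableSet_singleton _))).inter
      (((hcoord1 _) (measurableSet_singleton _)).inter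
        ((hcoord2 _) (measurableSet_singleton _)))
  have hmRA : MeasurableSet RA := by
    have he : RA = ⋂ s : Fin t, ((fun q : (Fin T → ℝ) × (Fin T → ℝ) =>
          q.1 ⟨(s : ℕ), lt_trans s.isLt ht⟩) ⁻¹' {zh s} ∩
        (fun q : (Fin T → ℝ) × (Fin T → ℝ) =>
          q.2 ⟨(s : ℕ), lt_trans s.isLt ht⟩) ⁻¹' {xh s}) := by
      rw [hRAdef]
      ext q
      simp only [Set.mem_setOf_eq, Set.mem_iInter, Set.mem_inter_iff, Set.mem_preimage,
        Set.mem_singleton_iff]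
    rw [he]
    exact MeasurableSet.iInter fun s =>
      ((hcoord1 _) (measurableSet_singleton _)).inter
        ((hcoord2 _) (measurableSet_singleton _))
  have hmSc : MeasurableSet Sc := by
    have hdm : ∀ s : Fin t, Measurable fun p : (Fin T → ℝ) × (Fin T → ℝ) =>
        decide (p.2 ⟨(s : ℕ), lt_trans s.isLt ht⟩ ≤
          M.πf s (fun r : Fin (s : ℕ) => M.ydet (pe p.1) de xe r)
            (fun r : Fin (s : ℕ) => dh ⟨r, lt_trans r.isLt s.isLt⟩) (zh s)) := by
      intro s
      refine DynModel.measurable_decide_le (hcoord2 _) ?_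
      exact (Measurable.of_discrete (f := fun v : Fin (s : ℕ) → Bool =>
        M.πf s v (fun r : Fin (s : ℕ) => dh ⟨r, lt_trans r.isLt s.isLt⟩) (zh s))).comp
        (measurable_pi_lambda _ fun r => hydmeas r)
    have he : Sc =
        (⋂ s : Fin t, (fun p : (Fin T → ℝ) × (Fin T → ℝ) =>
            M.ydet (pe p.1) de xe s) ⁻¹' {yh s}) ∩
        (⋂ s : Fin t, (fun p : (Fin T → ℝ) × (Fin T → ℝ) =>
            decide (p.2 ⟨(s : ℕ), lt_trans s.isLt ht⟩ ≤
              M.πf s (fun r : Fin (s : ℕ) => M.ydet (pe p.1) de xe r)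
                (fun r : Fin (s : ℕ) => dh ⟨r, lt_trans r.isLt s.isLt⟩) (zh s))) ⁻¹' {dh s}) := by
      rw [hScdef]
      ext p
      simp only [Set.mem_setOf_eq, Set.mem_inter_iff, Set.mem_iInter, Set.mem_preimage,
        Set.mem_singleton_iff]
      constructor
      · rintro ⟨h1, h2⟩
        exact ⟨h1, fun s => (h2 s).symm⟩
      · rintro ⟨h1, h2⟩
        exact ⟨h1, fun s => (h2 s).symm⟩
    rw [he]
    exact (MeasurableSet.iInter fun s => (hydmeas _) (measurableSet_singleton _)).inter
      (MeasurableSet.iInter fun s => (hdm s) (measurableSet_singleton _))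
  have hmSW : ∀ (μv : ℝ) (J : Set ℝ), MeasurableSet J → MeasurableSet (SW μv J) := by
    intro μv J hJ
    rw [hSWdef]
    have he : {p : (Fin T → ℝ) × (Fin T → ℝ) | p.1 ⟨t, ht⟩ ≤ μv ∧ p.2 ⟨t, ht⟩ ∈ J} =
        {p : (Fin T → ℝ) × (Fin T → ℝ) | p.1 ⟨t, ht⟩ ≤ μv} ∩
          ((fun p : (Fin T → ℝ) × (Fin T → ℝ) => p.2 ⟨t, ht⟩) ⁻¹' J) := by
      ext p; simp [Set.mem_inter_iff]
    refine hmSc.inter ?_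
    rw [he]
    exact (measurableSet_le (hcoord1 _) measurable_const).inter ((hcoord2 _) hJ)
  -- independence
  have hindep : ∀ (b : Bool) (R S : Set ((Fin T → ℝ) × (Fin T → ℝ))),
      MeasurableSet R → MeasurableSet S →
      M.P (F ⁻¹' R ∩ (g b) ⁻¹' S) = M.P (F ⁻¹' R) * M.P ((g b) ⁻¹' S) := by
    intro b R S hR hS
    rw [hFdef, hgdef]
    exact (hSX (d' b)).measure_inter_preimage_eq_mul R S hR hS
  -- event identities
  have hfull : ∀ z x, fullHistEvent M t zh xh dh yh z x = F ⁻¹' (RE z x) ∩ C := by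
    intro z x
    ext ω
    rw [hFdef, hREdef, hCdef]
    simp only [fullHistEvent, Set.mem_setOf_eq, Set.mem_inter_iff, Set.mem_preimage]
    constructor
    · rintro ⟨h1, hz, hx⟩
      have hzx : ∀ s : Fin t, M.Z s ω = zh s ∧ M.X s ω = xh s :=
        fun s => ⟨(h1 s).1, (h1 s).2.1⟩
      have hDY : ∀ s : Fin t, M.D s ω = dh s ∧ M.Y s ω = yh s :=
        fun s => ⟨(h1 s).2.2.1, (h1 s).2.2.2⟩
      have hc := (M.hist_equiv t ht zh xh dh yh de hde xe hxe ω hzx).mp hDY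
      exact ⟨⟨fun s => ⟨(hzx s).1, (hzx s).2⟩, hz, hx⟩, hc⟩
    · rintro ⟨⟨h1, hz, hx⟩, hc⟩
      have hzx : ∀ s : Fin t, M.Z s ω = zh s ∧ M.X s ω = xh s :=
        fun s => ⟨(h1 s).1, (h1 s).2⟩
      have hDY := (M.hist_equiv t ht zh xh dh yh de hde xe hxe ω hzx).mpr hc
      exact ⟨fun s => ⟨(hzx s).1, (hzx s).2, (hDY s).1, (hDY s).2⟩, hz, hx⟩
  have hfullW : ∀ (z x : ℝ) (b : Bool),
      fullHistEvent M t zh xh dh yh z x ∩ {ω | M.Y t ω = true ∧ M.D t ω = b} =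
      F ⁻¹' (RE z x) ∩ (C ∩ {ω | M.U t b ω ≤ M.μf t yh (Fin.snoc dh b) x ∧
        M.V t ω ∈ {w : ℝ | decide (w ≤ M.πf t yh dh z) = b}}) := by
    intro z x b
    ext ω
    rw [hFdef, hREdef, hCdef]
    simp only [fullHistEvent, Set.mem_setOf_eq, Set.mem_inter_iff, Set.mem_preimage]
    constructor
    · rintro ⟨⟨h1, hz, hx⟩, hY, hD⟩
      have hzx : ∀ s : Fin t, M.Z s ω = zh s ∧ M.X s ω = xh s :=
        fun s => ⟨(h1 s).1, (h1 s).2.1⟩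
      have hDY : ∀ s : Fin t, M.D s ω = dh s ∧ M.Y s ω = yh s :=
        fun s => ⟨(h1 s).2.2.1, (h1 s).2.2.2⟩
      have hc := (M.hist_equiv t ht zh xh dh yh de hde xe hxe ω hzx).mp hDY
      have htT := M.timeT t ht dh yh z x ω hDY hz hx
      have hdec : decide (M.V t ω ≤ M.πf t yh dh z) = b := by rw [← htT.1, hD]
      have hYt : M.Y t ω = decide (M.U t b ω ≤ M.μf t yh (Fin.snoc dh b) x) := htT.2 b hD
      have hU : M.U t b ω ≤ M.μf t yh (Fin.snoc dh b) x := by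
        have := hYt.symm.trans hY
        exact of_decide_eq_true this
      exact ⟨⟨fun s => ⟨(hzx s).1, (hzx s).2⟩, hz, hx⟩, hc, hU, hdec⟩
    · rintro ⟨⟨h1, hz, hx⟩, hc, hU, hdec⟩
      have hzx : ∀ s : Fin t, M.Z s ω = zh s ∧ M.X s ω = xh s :=
        fun s => ⟨(h1 s).1, (h1 s).2⟩
      have hDY := (M.hist_equiv t ht zh xh dh yh de hde xe hxe ω hzx).mpr hc
      have htT := M.timeT t ht dh yh z x ω hDY hz hx
      have hD : M.D t ω = b := htT.1.trans hdec
      have hY : M.Y t ω = true := by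
        rw [htT.2 b hD]
        exact decide_eq_true hU
      exact ⟨⟨fun s => ⟨(hzx s).1, (hzx s).2, (hDY s).1, (hDY s).2⟩, hz, hx⟩, hY, hD⟩
  -- the null set
  have hnull : M.P {ω | M.V t ω = π'} = 0 := by
    obtain ⟨f, hfpos, hmap⟩ := hC de
    have hmeasg0 : Measurable (fun ω =>
        ((fun s : Fin T => M.U s (de s) ω), (fun s : Fin T => M.V s ω))) :=
      (measurable_pi_lambda (fun ω : Ω => fun s : Fin T => M.U s (de s) ω)
          fun s => M.measU s (de s)).prodMk
        (measurable_pi_lambda (fun ω : Ω => fun s : Fin T => M.V s ω) fun s => M.measV s)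
    have hset : MeasurableSet {p : (Fin T → ℝ) × (Fin T → ℝ) | p.2 ⟨t, ht⟩ = π'} :=
      (hcoord2 ⟨t, ht⟩) (measurableSet_singleton π')
    have hpre : {ω | M.V t ω = π'} = (fun ω =>
        ((fun s : Fin T => M.U s (de s) ω), (fun s : Fin T => M.V s ω))) ⁻¹'
        {p : (Fin T → ℝ) × (Fin T → ℝ) | p.2 ⟨t, ht⟩ = π'} := rfl
    rw [hpre, ← Measure.map_apply hmeasg0 hset, hmap]
    exact (withDensity_absolutelyContinuous volume f) (volume_snd_eq_zero T ⟨t, ht⟩ π')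
  -- measure product formulas
  have hPfull : ∀ z x, M.P (fullHistEvent M t zh xh dh yh z x) =
      M.P (F ⁻¹' (RE z x)) * M.P C := by
    intro z x
    rw [hfull z x, ← hgSc true, hindep true _ _ (hmRE z x) hmSc, hgSc true]
  have hmJ : ∀ (z : ℝ) (b : Bool),
      MeasurableSet {w : ℝ | decide (w ≤ M.πf t yh dh z) = b} := fun z b =>
    (DynModel.measurable_decide_le measurable_id measurable_const) (measurableSet_singleton b)
  have hPfullW : ∀ (z x : ℝ) (b : Bool),
      M.P (fullHistEvent M t zh xh dh yh z x ∩ {ω | M.Y t ω = true ∧ M.D t ω = b}) =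
      M.P (F ⁻¹' (RE z x)) * M.P (C ∩ {ω | M.U t b ω ≤ M.μf t yh (Fin.snoc dh b) x ∧
        M.V t ω ∈ {w : ℝ | decide (w ≤ M.πf t yh dh z) = b}}) := by
    intro z x b
    rw [hfullW z x b, ← hgSW b (M.μf t yh (Fin.snoc dh b) x)
      {w : ℝ | decide (w ≤ M.πf t yh dh z) = b},
      hindep b _ _ (hmRE z x) (hmSW _ _ (hmJ z b)),
      hgSW b (M.μf t yh (Fin.snoc dh b) x) {w : ℝ | decide (w ≤ M.πf t yh dh z) = b}]
  -- the A event
  set Aev : Set Ω := {ω | (∀ s : Fin t, M.Z s ω = zh s ∧ M.X s ω = xh s) ∧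
      (∀ s : Fin t, M.ydet (fun r => M.U r (de r) ω) de xe s = yh s) ∧
      (∀ s : Fin t, dh s = decide (M.V s ω ≤
        M.πf s (fun r : Fin (s : ℕ) => M.ydet (fun r' => M.U r' (de r') ω) de xe r)
          (fun r : Fin (s : ℕ) => dh ⟨r, lt_trans r.isLt s.isLt⟩) (zh s)))} with hAdef
  have hAeq : Aev = F ⁻¹' RA ∩ C := by
    rw [hAdef, hFdef, hRAdef, hCdef]
    ext ω
    simp only [Set.mem_setOf_eq, Set.mem_inter_iff, Set.mem_preimage]
  have hPA : M.P Aev = M.P (F ⁻¹' RA) * M.P C := by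
    rw [hAeq, ← hgSc true, hindep true _ _ hmRA hmSc, hgSc true]
  have hPAW : ∀ (b : Bool) (μv : ℝ) (J : Set ℝ), MeasurableSet J →
      M.P (Aev ∩ {ω | M.U t b ω ≤ μv ∧ M.V t ω ∈ J}) =
      M.P (F ⁻¹' RA) * M.P (C ∩ {ω | M.U t b ω ≤ μv ∧ M.V t ω ∈ J}) := by
    intro b μv J hJ
    rw [hAeq, Set.inter_assoc, ← hgSW b μv J, hindep b _ _ hmRA (hmSW μv J hJ), hgSW b μv J]
  -- measurability of Ω-sets
  have hmC : MeasurableSet C := by rw [← hgSc true]; exact (hgmeas true) hmSc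
  have hmfh : ∀ z x, MeasurableSet (fullHistEvent M t zh xh dh yh z x) := by
    intro z x; rw [hfull]; exact (hFmeas (hmRE z x)).inter hmC
  have hmA : MeasurableSet Aev := by rw [hAeq]; exact (hFmeas hmRA).inter hmC
  -- nonvanishing
  have hcfin : M.P C ≠ ⊤ := measure_ne_top _ _
  obtain ⟨he1, hc0⟩ := mul_ne_zero_iff.mp (ne_of_gt ((hPfull zt xt) ▸ hpos1))
  obtain ⟨he2, -⟩ := mul_ne_zero_iff.mp (ne_of_gt ((hPfull zt xtt) ▸ hpos2))
  obtain ⟨he3, -⟩ := mul_ne_zero_iff.mp (ne_of_gt ((hPfull ztt xt) ▸ hpos3))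
  obtain ⟨he4, -⟩ := mul_ne_zero_iff.mp (ne_of_gt ((hPfull ztt xtt) ▸ hpos4))
  obtain ⟨heA, -⟩ := mul_ne_zero_iff.mp (ne_of_gt (hPA ▸ hposA))
  -- rewrite the conditional probabilities
  have hIcc1 : {ω | M.U t true ω ≤ μ1 ∧ π' ≤ M.V t ω ∧ M.V t ω ≤ π} =
      {ω | M.U t true ω ≤ μ1 ∧ M.V t ω ∈ Set.Icc π' π} := by
    ext ω; simp [Set.mem_Icc]
  have hIcc0 : {ω | M.U t false ω ≤ μ0 ∧ π' ≤ M.V t ω ∧ M.V t ω ≤ π} =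
      {ω | M.U t false ω ≤ μ0 ∧ M.V t ω ∈ Set.Icc π' π} := by
    ext ω; simp [Set.mem_Icc]
  rw [hIcc1, hIcc0]
  rw [ProbabilityTheory.cond_apply (hmfh zt xt) M.P,
    ProbabilityTheory.cond_apply (hmfh zt xtt) M.P,
    ProbabilityTheory.cond_apply (hmfh ztt xt) M.P,
    ProbabilityTheory.cond_apply (hmfh ztt xtt) M.P,
    ProbabilityTheory.cond_apply hmA M.P, ProbabilityTheory.cond_apply hmA M.P]
  rw [hPfullW zt xt true, hPfullW zt xtt false, hPfullW ztt xt true, hPfullW ztt xtt false,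
    hPfull zt xt, hPfull zt xtt, hPfull ztt xt, hPfull ztt xtt,
    hPAW true μ1 (Set.Icc π' π) measurableSet_Icc,
    hPAW false μ0 (Set.Icc π' π) measurableSet_Icc, hPA]
  rw [← hμ1def, ← hμ0def, ← hπdef, ← hπ'def]
  -- convert to real ratios
  rw [ennreal_ratio_toReal _ _ _ he1 (measure_ne_top _ _) hc0 hcfin (measure_ne_top _ _),
    ennreal_ratio_toReal _ _ _ he2 (measure_ne_top _ _) hc0 hcfin (measure_ne_top _ _),
    ennreal_ratio_toReal _ _ _ he3 (measure_ne_top _ _) hc0 hcfin (measure_ne_top _ _),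
    ennreal_ratio_toReal _ _ _ he4 (measure_ne_top _ _) hc0 hcfin (measure_ne_top _ _),
    ennreal_ratio_toReal _ _ _ heA (measure_ne_top _ _) hc0 hcfin (measure_ne_top _ _),
    ennreal_ratio_toReal _ _ _ heA (measure_ne_top _ _) hc0 hcfin (measure_ne_top _ _)]
  -- normalize the intersection shapes
  set K1 : Set Ω := C ∩ {ω | M.U t true ω ≤ μ1} with hK1def
  set K0 : Set Ω := C ∩ {ω | M.U t false ω ≤ μ0} with hK0def
  have hmK1 : MeasurableSet K1 := by
    rw [hK1def]; exact hmC.inter (measurableSet_le (M.measU t true) measurable_const)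
  have hmK0 : MeasurableSet K0 := by
    rw [hK0def]; exact hmC.inter (measurableSet_le (M.measU t false) measurable_const)
  have hs1 : C ∩ {ω | M.U t true ω ≤ μ1 ∧ M.V t ω ∈ {w : ℝ | decide (w ≤ π) = true}} =
      K1 ∩ {ω | M.V t ω ≤ π} := by
    rw [hK1def, Set.inter_assoc]
    congr 1
    ext ω
    simp only [Set.mem_setOf_eq, Set.mem_inter_iff, decide_eq_true_eq]
  have hs3 : C ∩ {ω | M.U t true ω ≤ μ1 ∧ M.V t ω ∈ {w : ℝ | decide (w ≤ π') = true}} =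
      K1 ∩ {ω | M.V t ω ≤ π'} := by
    rw [hK1def, Set.inter_assoc]
    congr 1
    ext ω
    simp only [Set.mem_setOf_eq, Set.mem_inter_iff, decide_eq_true_eq]
  have hs2 : C ∩ {ω | M.U t false ω ≤ μ0 ∧ M.V t ω ∈ {w : ℝ | decide (w ≤ π) = false}} =
      K0 ∩ {ω | ¬ M.V t ω ≤ π} := by
    rw [hK0def, Set.inter_assoc]
    congr 1
    ext ω
    simp only [Set.mem_setOf_eq, Set.mem_inter_iff, decide_eq_false_iff_not]
  have hs4 : C ∩ {ω | M.U t false ω ≤ μ0 ∧ M.V t ω ∈ {w : ℝ | decide (w ≤ π') = false}} =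
      K0 ∩ {ω | ¬ M.V t ω ≤ π'} := by
    rw [hK0def, Set.inter_assoc]
    congr 1
    ext ω
    simp only [Set.mem_setOf_eq, Set.mem_inter_iff, decide_eq_false_iff_not]
  have hbb1 : C ∩ {ω | M.U t true ω ≤ μ1 ∧ M.V t ω ∈ Set.Icc π' π} =
      K1 ∩ {ω | π' ≤ M.V t ω ∧ M.V t ω ≤ π} := by
    rw [hK1def, Set.inter_assoc]
    congr 1
  have hbb0 : C ∩ {ω | M.U t false ω ≤ μ0 ∧ M.V t ω ∈ Set.Icc π' π} =
      K0 ∩ {ω | π' ≤ M.V t ω ∧ M.V t ω ≤ π} := by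
    rw [hK0def, Set.inter_assoc]
    congr 1
  rw [hs1, hs2, hs3, hs4, hbb1, hbb0]
  -- band decomposition
  obtain ⟨hband1, -⟩ := band_lemma M.P (M.V t) (M.measV t) K1 hmK1 π' π hππ hnull
  obtain ⟨-, hband2⟩ := band_lemma M.P (M.V t) (M.measV t) K0 hmK0 π' π hππ hnull
  rw [hband1, hband2]
  rw [ENNReal.toReal_add (measure_ne_top _ _) (measure_ne_top _ _),
    ENNReal.toReal_add (measure_ne_top _ _) (measure_ne_top _ _)]
  ring
end
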